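/- In a directed layered graph H with source vertices r and g in the top layer, where every vertex has a path to the bottom layer l_0: if there exists a bottleneck (a vertex lying on every path from r to l_0 and every path from g to l_0), then there exists a unique highest bottleneck; otherwise there exist vertex-disjoint paths from r and g to two distinct vertices of l_0. -/

import Mathlib

namespace MV

/-- `l` is a directed path starting at `x` and ending in layer `0`. -/
def PathTo0 {V : Type*} (E : V → V → Prop) (layer : V → ℕ) (x : V) (l : List V) : Prop :=
  l ≠ [] ∧ l.head? = some x ∧ List.Chain' E l ∧ ∃ z, l.getLast? = some z ∧ layer z = 0

/-- `v` is a bottleneck: it lies on every path from `r` to layer `0` and on every path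
from `g` to layer `0`. -/
def Bottleneck {V : Type*} (E : V → V → Prop) (layer : V → ℕ) (r g : V) (v : V) : Prop :=
  (∀ l, PathTo0 E layer r l → v ∈ l) ∧ (∀ l, PathTo0 E layer g l → v ∈ l)

section Helpers

variable {V : Type*}

/-- The list of consecutive pairs of a list. -/
def edgesOf (l : List V) : List (V × V) := l.zip l.tail

lemma edgesOf_cons₂ (a b : V) (t : List V) :
    edgesOf (a :: b :: t) = (a, b) :: edgesOf (b :: t) := rfl

lemma chain'_of_edges {R : V → V → Prop} :
    ∀ l : List V, (∀ p ∈ edgesOf l, R p.1 p.2) → List.Chain' R l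
  | [], _ => List.isChain_nil
  | [a], _ => List.isChain_singleton a
  | a :: b :: t, h => by
      simp only [List.Chain', List.isChain_cons_cons]
      exact ⟨h (a, b) (by rw [edgesOf_cons₂]; exact List.mem_cons_self),
        chain'_of_edges (b :: t) fun p hp => h p (by rw [edgesOf_cons₂]; exact List.mem_cons_of_mem _ hp)⟩

lemma edges_of_chain' {R : V → V → Prop} :
    ∀ l : List V, List.Chain' R l → ∀ p ∈ edgesOf l, R p.1 p.2
  | [], _, p, hp => by simp [edgesOf] at hp
  | [a], _, p, hp => by simp [edgesOf] at hp
  | a :: b :: t, h, p, hp => by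
      simp only [List.Chain', List.isChain_cons_cons] at h
      rw [edgesOf_cons₂, List.mem_cons] at hp
      rcases hp with hp | hp
      · subst hp; exact h.1
      · exact edges_of_chain' (b :: t) h.2 p hp

/-- Path in the graph given by an edge list `F`, from `x`, ending in the sink set `T`. -/
def PathF (F : List (V × V)) (T : V → Prop) (x : V) (l : List V) : Prop :=
  l ≠ [] ∧ l.head? = some x ∧ List.Chain' (fun u w => (u, w) ∈ F) l ∧
    ∃ z, l.getLast? = some z ∧ T z

lemma pairwise_layerR (layer : V → ℕ) {R : V → V → Prop}
    (hm : ∀ u w, R u w → layer w < layer u) {l : List V} (hc : List.Chain' R l) :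
    l.Pairwise (fun u w => layer w < layer u) := by
  haveI : IsTrans V (fun u w : V => layer w < layer u) := ⟨fun a b c h1 h2 => h2.trans h1⟩
  exact List.isChain_iff_pairwise.mp (hc.imp fun a b hab => hm a b hab)

lemma pairwise_layerF (layer : V → ℕ) {F : List (V × V)}
    (hm : ∀ p ∈ F, layer p.2 < layer p.1) {l : List V}
    (hc : List.Chain' (fun u w => (u, w) ∈ F) l) :
    l.Pairwise (fun u w => layer w < layer u) :=
  pairwise_layerR layer (fun u w h => hm (u, w) h) hc

lemma pw_head {R : V → V → Prop} {l : List V} {a u : V} (h : l.Pairwise R)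
    (hh : l.head? = some a) (hu : u ∈ l) (hne : u ≠ a) : R a u := by
  cases l with
  | nil => simp at hh
  | cons x t =>
    rw [List.head?_cons, Option.some_inj] at hh
    subst hh
    rcases List.mem_cons.mp hu with rfl | hu
    · exact absurd rfl hne
    · exact (List.pairwise_cons.mp h).1 u hu

lemma pw_last {R : V → V → Prop} {l : List V} {a u : V} (h : l.Pairwise R)
    (hh : l.getLast? = some a) (hu : u ∈ l) (hne : u ≠ a) : R u a := by
  have h' : l.reverse.Pairwise (fun x y => R y x) := List.pairwise_reverse.mpr h
  have hh' : l.reverse.head? = some a := by rw [List.head?_reverse]; exact hh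
  exact pw_head (R := fun x y => R y x) h' hh' (List.mem_reverse.mpr hu) hne

lemma pw_two {R : V → V → Prop} {l : List V} (h : l.Pairwise R) {u w : V}
    (hu : u ∈ l) (hw : w ∈ l) (hne : u ≠ w) : R u w ∨ R w u := by
  induction l with
  | nil => simp at hu
  | cons x t ih =>
    obtain ⟨hx, ht⟩ := List.pairwise_cons.mp h
    rcases List.mem_cons.mp hu with h1 | h1
    · rcases List.mem_cons.mp hw with h2 | h2
      · exact absurd (h1.trans h2.symm) hne
      · exact Or.inl (h1 ▸ hx w h2)
    · rcases List.mem_cons.mp hw with h2 | h2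
      · exact Or.inr (h2 ▸ hx u h1)
      · exact ih ht h1 h2

lemma exists_firstSeg (p : V → Prop) :
    ∀ l : List V, (∃ v ∈ l, p v) →
      ∃ l', l' <+: l ∧ l'.head? = l.head? ∧ (∃ w, l'.getLast? = some w ∧ p w) ∧
        ∀ u ∈ l'.dropLast, ¬ p u := by
  intro l
  induction l with
  | nil => rintro ⟨v, hv, -⟩; simp at hv
  | cons x xs ih =>
    intro hex
    by_cases hx : p x
    · exact ⟨[x], ⟨xs, rfl⟩, rfl, ⟨x, rfl, hx⟩, by simp⟩
    · have hex' : ∃ v ∈ xs, p v := by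
        rcases hex with ⟨v, hv, hpv⟩
        rcases List.mem_cons.mp hv with rfl | hv
        · exact absurd hpv hx
        · exact ⟨v, hv, hpv⟩
      obtain ⟨l', hpre, hhead, ⟨w, hw, hpw⟩, hdrop⟩ := ih hex'
      have hxs : xs ≠ [] := by rcases hex' with ⟨v, hv, -⟩; exact List.ne_nil_of_mem hv
      have hne : l' ≠ [] := by
        intro hn; rw [hn] at hhead; exact hxs (List.head?_eq_none_iff.mp hhead.symm)
      obtain ⟨c, cs, rfl⟩ := List.exists_cons_of_ne_nil hne
      refine ⟨x :: c :: cs, ?_, rfl, ⟨w, ?_, hpw⟩, ?_⟩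
      · obtain ⟨t, ht⟩ := hpre
        exact ⟨t, by rw [List.cons_append, ht]⟩
      · rw [List.getLast?_cons_cons]; exact hw
      · intro u hu
        rw [List.dropLast_cons₂, List.mem_cons] at hu
        rcases hu with rfl | hu
        · exact hx
        · exact hdrop u hu

lemma tail_reverse_eq (l : List V) : l.reverse.tail = l.dropLast.reverse := by
  rcases List.eq_nil_or_concat l with rfl | ⟨L, b, rfl⟩
  · simp
  · simp [List.concat_eq_append]

lemma exists_lastSeg (p : V → Prop) (l : List V) (hex : ∃ v ∈ l, p v) :
    ∃ l', l' <:+ l ∧ l'.getLast? = l.getLast? ∧ (∃ w, l'.head? = some w ∧ p w) ∧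
      ∀ u ∈ l'.tail, ¬ p u := by
  obtain ⟨l₀, hpre, hhead, ⟨w, hw, hpw⟩, hdrop⟩ :=
    exists_firstSeg p l.reverse ⟨hex.choose, by
      rcases hex.choose_spec with ⟨h1, _⟩; exact List.mem_reverse.mpr h1,
      hex.choose_spec.2⟩
  refine ⟨l₀.reverse, ?_, ?_, ⟨w, ?_, hpw⟩, ?_⟩
  · obtain ⟨t, ht⟩ := hpre
    refine ⟨t.reverse, ?_⟩
    have := congrArg List.reverse ht
    rwa [List.reverse_append, List.reverse_reverse] at this
  · rw [List.getLast?_reverse, hhead, List.head?_reverse]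
  · rw [List.head?_reverse]; exact hw
  · intro u hu
    rw [tail_reverse_eq] at hu
    exact hdrop u (List.mem_reverse.mp hu)

lemma chain_cases {e : V × V} {F₀ : List (V × V)} :
    ∀ {l : List V}, List.Chain' (fun u w => (u, w) ∈ e :: F₀) l →
      List.Chain' (fun u w => (u, w) ∈ F₀) l ∨ (e.1 ∈ l ∧ e.2 ∈ l)
  | [], _ => Or.inl List.isChain_nil
  | [a], _ => Or.inl (List.isChain_singleton a)
  | a :: b :: t, h => by
      simp only [List.Chain', List.isChain_cons_cons] at h
      rcases List.mem_cons.mp h.1 with h1 | h1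
      · have h1' : a = e.1 ∧ b = e.2 := by
          have := congrArg Prod.fst h1
          have := congrArg Prod.snd h1
          constructor <;> simp_all
        exact Or.inr ⟨h1'.1 ▸ List.mem_cons_self,
          h1'.2 ▸ List.mem_cons_of_mem _ (List.mem_cons_self)⟩
      · rcases chain_cases h.2 with h2 | h2
        · exact Or.inl (List.isChain_cons_cons.mpr ⟨h1, h2⟩)
        · exact Or.inr ⟨List.mem_cons_of_mem _ h2.1, List.mem_cons_of_mem _ h2.2⟩

lemma chain_drop1 {e : V × V} {F₀ : List (V × V)} :
    ∀ {l : List V}, List.Chain' (fun u w => (u, w) ∈ e :: F₀) l →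
      e.1 ∉ l.dropLast → List.Chain' (fun u w => (u, w) ∈ F₀) l
  | [], _, _ => List.isChain_nil
  | [a], _, _ => List.isChain_singleton a
  | a :: b :: t, h, hd => by
      simp only [List.Chain', List.isChain_cons_cons] at h
      have hdrop : (a :: b :: t).dropLast = a :: (b :: t).dropLast := List.dropLast_cons₂ ..
      rw [hdrop, List.mem_cons] at hd
      push_neg at hd
      rcases List.mem_cons.mp h.1 with h1 | h1
      · exact absurd (congrArg Prod.fst h1).symm hd.1
      · exact List.isChain_cons_cons.mpr ⟨h1, chain_drop1 h.2 hd.2⟩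

lemma chain_drop2 {e : V × V} {F₀ : List (V × V)} :
    ∀ {l : List V}, List.Chain' (fun u w => (u, w) ∈ e :: F₀) l →
      e.2 ∉ l.tail → List.Chain' (fun u w => (u, w) ∈ F₀) l
  | [], _, _ => List.isChain_nil
  | [a], _, _ => List.isChain_singleton a
  | a :: b :: t, h, hd => by
      simp only [List.Chain', List.isChain_cons_cons] at h
      rw [List.tail_cons, List.mem_cons] at hd
      push_neg at hd
      rcases List.mem_cons.mp h.1 with h1 | h1
      · exact absurd (congrArg Prod.snd h1).symm hd.1
      · exact List.isChain_cons_cons.mpr ⟨h1, chain_drop2 h.2 hd.2⟩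

lemma exists_paths_of_noBN {F : List (V × V)} {T : V → Prop} {a b : V}
    (hnb : ¬ ∃ v, (∀ l, PathF F T a l → v ∈ l) ∧ (∀ l, PathF F T b l → v ∈ l)) :
    (∃ la, PathF F T a la) ∧ (∃ lb, PathF F T b lb) := by
  have key : ∀ (s t : V),
      (¬ ∃ v, (∀ l, PathF F T s l → v ∈ l) ∧ (∀ l, PathF F T t l → v ∈ l)) →
      ∃ ls, PathF F T s ls := by
    intro s t hnb'
    by_contra hno
    push_neg at hno
    have h1 : ∀ v, ∀ l, PathF F T s l → v ∈ l := fun v l hl => absurd hl (hno l)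
    have h2 := hnb'
    push_neg at h2
    obtain ⟨l, hl, htl⟩ := h2 t (h1 t)
    have : t ∈ l := List.mem_of_mem_head? (hl.2.1 ▸ rfl : t ∈ l.head?)
    exact htl this
  have hnb' : ¬ ∃ v, (∀ l, PathF F T b l → v ∈ l) ∧ (∀ l, PathF F T a l → v ∈ l) := by
    rintro ⟨v, hv1, hv2⟩; exact hnb ⟨v, hv2, hv1⟩
  exact ⟨key a b hnb, key b a hnb'⟩

lemma splice (layer : V → ℕ) {F : List (V × V)} {T : V → Prop} {l1 l2 : List V} {s v : V}
    (hmono : ∀ p ∈ F, layer p.2 < layer p.1)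
    (h1 : List.Chain' (fun u w => (u, w) ∈ F) l1) (hh : l1.head? = some s) (hv1 : v ∈ l1)
    (h2 : List.Chain' (fun u w => (u, w) ∈ F) l2) (hv2 : v ∈ l2)
    (he : ∃ w, l2.getLast? = some w ∧ T w) :
    ∃ l, PathF F T s l ∧
      ∀ u ∈ l, u = v ∨ (u ∈ l1 ∧ layer v < layer u) ∨ (u ∈ l2 ∧ layer u < layer v) := by
  obtain ⟨l1', hpre, hhead, ⟨w1, hw1, hpw1⟩, -⟩ :=
    exists_firstSeg (fun u => u = v) l1 ⟨v, hv1, rfl⟩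
  rw [hpw1] at hw1
  obtain ⟨l2', hsuf, hlast, ⟨w2, hw2, hpw2⟩, -⟩ :=
    exists_lastSeg (fun u => u = v) l2 ⟨v, hv2, rfl⟩
  rw [hpw2] at hw2
  have hc1 : List.Chain' (fun u w => (u, w) ∈ F) l1' := h1.prefix hpre
  have hc2 : List.Chain' (fun u w => (u, w) ∈ F) l2' := h2.suffix hsuf
  have hne1 : l1' ≠ [] := fun hn => by simp [hn] at hw1
  have hne2 : l2' ≠ [] := fun hn => by simp [hn] at hw2
  obtain ⟨c, cs, rfl⟩ := List.exists_cons_of_ne_nil hne2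
  rw [List.head?_cons, Option.some_inj] at hw2
  subst hw2
  have hpw1' : l1'.Pairwise (fun u w => layer w < layer u) :=
    pairwise_layerF layer hmono hc1
  have hpw2' : (c :: cs).Pairwise (fun u w => layer w < layer u) :=
    pairwise_layerF layer hmono hc2
  refine ⟨l1' ++ cs, ⟨?_, ?_, ?_, ?_⟩, ?_⟩
  · exact fun hc => hne1 (List.append_eq_nil_iff.mp hc).1
  · rw [List.head?_append, hhead, hh]; rfl
  · simp only [List.Chain', List.isChain_append]
    refine ⟨hc1, hc2.tail, ?_⟩
    intro x hx y hy
    rw [hw1, Option.mem_def, Option.some_inj] at hx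
    subst hx
    exact (List.isChain_cons.mp hc2).1 y hy
  · obtain ⟨w, hw, hTw⟩ := he
    rcases cs with - | ⟨c1, cs1⟩
    · have hv : l2.getLast? = some c := by rw [← hlast]; rfl
      rw [hv, Option.some_inj] at hw
      refine ⟨c, ?_, hw ▸ hTw⟩
      rw [List.append_nil, hw1]
    · refine ⟨w, ?_, hTw⟩
      have h5 : (c :: c1 :: cs1).getLast? = (c1 :: cs1).getLast? := List.getLast?_cons_cons
      rw [List.getLast?_append_of_ne_nil _ (by simp), ← h5, hlast, hw]
  · intro u hu
    rcases List.mem_append.mp hu with hu | hu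
    · by_cases huv : u = c
      · exact Or.inl huv
      · exact Or.inr (Or.inl ⟨hpre.subset hu,
          pw_last (R := fun u w => layer w < layer u) hpw1' hw1 hu huv⟩)
    · have hu' : u ∈ c :: cs := List.mem_cons_of_mem _ hu
      by_cases huv : u = c
      · exact Or.inl huv
      · exact Or.inr (Or.inr ⟨hsuf.subset hu',
          pw_head (R := fun u w => layer w < layer u) hpw2' rfl hu' huv⟩)

lemma mem_of_getLast?' {l : List V} {w : V} (h : l.getLast? = some w) : w ∈ l := by
  obtain ⟨ys, rfl⟩ := List.getLast?_eq_some_iff.mp h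
  simp

lemma menger2 (layer : V → ℕ) :
    ∀ (F : List (V × V)) (T : V → Prop) (a b : V),
      (∀ p ∈ F, layer p.2 < layer p.1) → a ≠ b →
      (¬ ∃ v, (∀ l, PathF F T a l → v ∈ l) ∧ (∀ l, PathF F T b l → v ∈ l)) →
      ∃ la lb, PathF F T a la ∧ PathF F T b lb ∧ ∀ u ∈ la, u ∉ lb := by
  intro F
  induction F with
  | nil =>
    intro T a b hmono hab hnb
    obtain ⟨⟨la, hla⟩, ⟨lb, hlb⟩⟩ := exists_paths_of_noBN hnb
    have hsing : ∀ (s : V) (l : List V), PathF ([] : List (V × V)) T s l → l = [s] := by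
      intro s l hl
      obtain ⟨hne, hhead, hchain, -⟩ := hl
      rcases l with - | ⟨u, - | ⟨w, t⟩⟩
      · exact absurd rfl hne
      · rw [List.head?_cons, Option.some_inj] at hhead; rw [hhead]
      · exact absurd (List.isChain_cons_cons.mp hchain).1 (by simp)
    refine ⟨la, lb, hla, hlb, ?_⟩
    intro u hu hu'
    rw [hsing a la hla] at hu
    rw [hsing b lb hlb] at hu'
    simp at hu hu'
    exact hab (hu.symm.trans hu')
  | cons e F₀ ih =>
    obtain ⟨x, y⟩ := e
    intro T a b hmono hab hnb
    have hmono₀ : ∀ p ∈ F₀, layer p.2 < layer p.1 :=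
      fun p hp => hmono p (List.mem_cons_of_mem _ hp)
    by_cases h0 : ∃ z, (∀ l, PathF F₀ T a l → z ∈ l) ∧ (∀ l, PathF F₀ T b l → z ∈ l)
    case neg =>
      obtain ⟨la, lb, hla, hlb, hd⟩ := ih T a b hmono₀ hab h0
      have lift : ∀ s l, PathF F₀ T s l → PathF ((x, y) :: F₀) T s l := by
        rintro s l ⟨h1, h2, h3, h4⟩
        exact ⟨h1, h2, h3.imp (fun u w hm => List.mem_cons_of_mem _ hm), h4⟩
      exact ⟨la, lb, lift a la hla, lift b lb hlb, hd⟩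
    case pos =>
    obtain ⟨z, hza, hzb⟩ := h0
    have hexy : layer y < layer x := hmono (x, y) (List.mem_cons_self)
    have hxy : x ≠ y := fun hq => by rw [hq] at hexy; omega
    -- a witness path avoiding z must use the edge (x, y)
    have hzw : ∃ W, (PathF ((x, y) :: F₀) T a W ∨ PathF ((x, y) :: F₀) T b W) ∧ z ∉ W := by
      by_contra hcon
      push_neg at hcon
      exact hnb ⟨z, fun l hl => hcon l (Or.inl hl), fun l hl => hcon l (Or.inr hl)⟩
    obtain ⟨W, hWright, hzW⟩ := hzw
    have hWchain : List.Chain' (fun u w => (u, w) ∈ (x, y) :: F₀) W := by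
      rcases hWright with h | h
      exacts [h.2.2.1, h.2.2.1]
    have hxyW : x ∈ W ∧ y ∈ W := by
      rcases chain_cases hWchain with hc | hc
      · exfalso
        rcases hWright with h | h
        · exact hzW (hza W ⟨h.1, h.2.1, hc, h.2.2.2⟩)
        · exact hzW (hzb W ⟨h.1, h.2.1, hc, h.2.2.2⟩)
      · exact hc
    have hxz : x ≠ z := fun hq => hzW (hq ▸ hxyW.1)
    have hyz : y ≠ z := fun hq => hzW (hq ▸ hxyW.2)
    -- every a- or b-path in F hits {z,x} and hits {z,y}
    have hhit : ∀ s l, (s = a ∨ s = b) → PathF ((x, y) :: F₀) T s l →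
        (∃ v ∈ l, v = z ∨ v = x) ∧ (∃ v ∈ l, v = z ∨ v = y) := by
      intro s l hs hl
      rcases chain_cases hl.2.2.1 with hc | hc
      · have hl₀ : PathF F₀ T s l := ⟨hl.1, hl.2.1, hc, hl.2.2.2⟩
        have hz : z ∈ l := by rcases hs with rfl | rfl; exacts [hza l hl₀, hzb l hl₀]
        exact ⟨⟨z, hz, Or.inl rfl⟩, ⟨z, hz, Or.inl rfl⟩⟩
      · exact ⟨⟨x, hc.1, Or.inr rfl⟩, ⟨y, hc.2, Or.inr rfl⟩⟩
    -- above {z, x}: no single vertex lies on all a- and b-paths to {z, x}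
    have hupper : ¬ ∃ v, (∀ l, PathF F₀ (fun u => u = z ∨ u = x) a l → v ∈ l) ∧
        (∀ l, PathF F₀ (fun u => u = z ∨ u = x) b l → v ∈ l) := by
      rintro ⟨v₀, hv₀a, hv₀b⟩
      apply hnb
      have key : ∀ s l, (s = a ∨ s = b) → PathF ((x, y) :: F₀) T s l →
          (∀ l', PathF F₀ (fun u => u = z ∨ u = x) s l' → v₀ ∈ l') → v₀ ∈ l := by
        intro s l hs hl hv
        obtain ⟨l', hpre, hhead, hlastx, hdrop⟩ :=
          exists_firstSeg (fun u => u = z ∨ u = x) l (hhit s l hs hl).1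
        have hne' : l' ≠ [] := by
          intro hn; rw [hn] at hhead
          exact hl.1 (List.head?_eq_none_iff.mp hhead.symm)
        have hch₀ : List.Chain' (fun u w => (u, w) ∈ F₀) l' :=
          chain_drop1 (hl.2.2.1.prefix hpre) (fun hc => hdrop x hc (Or.inr rfl))
        exact hpre.subset (hv l' ⟨hne', hhead.trans hl.2.1, hch₀, hlastx⟩)
      exact ⟨v₀, fun l hl => key a l (Or.inl rfl) hl hv₀a,
        fun l hl => key b l (Or.inr rfl) hl hv₀b⟩
    obtain ⟨Ua, Ub, hUa, hUb, hUd⟩ := ih (fun u => u = z ∨ u = x) a b hmono₀ hab hupper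
    -- truncate the upper paths at their first visit to {z, x}
    have trunc : ∀ s U, PathF F₀ (fun u => u = z ∨ u = x) s U →
        ∃ P, (∀ u ∈ P, u ∈ U) ∧ PathF F₀ (fun u => u = z ∨ u = x) s P ∧
          ∀ u ∈ P.dropLast, ¬ (u = z ∨ u = x) := by
      intro s U hU
      obtain ⟨w0, hw0, hTw0⟩ := hU.2.2.2
      obtain ⟨P, hpre, hhead, hlast, hdrop⟩ :=
        exists_firstSeg (fun u => u = z ∨ u = x) U ⟨w0, mem_of_getLast?' hw0, hTw0⟩
      have hne' : P ≠ [] := by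
        intro hn; rw [hn] at hhead
        exact hU.1 (List.head?_eq_none_iff.mp hhead.symm)
      exact ⟨P, fun u hu => hpre.subset hu,
        ⟨hne', hhead.trans hU.2.1, hU.2.2.1.prefix hpre, hlast⟩, hdrop⟩
    obtain ⟨Pa, hPaU, hPa, hPad⟩ := trunc a Ua hUa
    obtain ⟨Pb, hPbU, hPb, hPbd⟩ := trunc b Ub hUb
    have hPd : ∀ u ∈ Pa, u ∉ Pb := fun u hu hu' => hUd u (hPaU u hu) (hPbU u hu')
    -- below: no single vertex lies on all z- and y-paths to T
    have hzy : z ≠ y := fun hq => hyz hq.symm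
    have hlower : ¬ ∃ v, (∀ l, PathF F₀ T z l → v ∈ l) ∧ (∀ l, PathF F₀ T y l → v ∈ l) := by
      rintro ⟨v₀, hv₀z, hv₀y⟩
      apply hnb
      have key : ∀ s l, (s = a ∨ s = b) → PathF ((x, y) :: F₀) T s l → v₀ ∈ l := by
        intro s l hs hl
        obtain ⟨l', hsuf, hlast, ⟨w', hw', hpw'⟩, htl⟩ :=
          exists_lastSeg (fun u => u = z ∨ u = y) l (hhit s l hs hl).2
        have hne' : l' ≠ [] := fun hn => by rw [hn] at hw'; simp at hw'
        have hch₀ : List.Chain' (fun u w => (u, w) ∈ F₀) l' :=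
          chain_drop2 (hl.2.2.1.suffix hsuf) (fun hc => htl y hc (Or.inr rfl))
        have hlast' : ∃ zz, l'.getLast? = some zz ∧ T zz := by
          obtain ⟨zz, hzz, hz3⟩ := hl.2.2.2
          exact ⟨zz, by rw [hlast, hzz], hz3⟩
        have hPl : v₀ ∈ l' := by
          rcases hpw' with rfl | rfl
          · exact hv₀z l' ⟨hne', hw', hch₀, hlast'⟩
          · exact hv₀y l' ⟨hne', hw', hch₀, hlast'⟩
        exact hsuf.subset hPl
      exact ⟨v₀, fun l hl => key a l (Or.inl rfl) hl, fun l hl => key b l (Or.inr rfl) hl⟩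
    obtain ⟨Qz, Qy, hQz, hQy, hQd⟩ := ih T z y hmono₀ hzy hlower
    have hzQz : z ∈ Qz := List.mem_of_mem_head? (by rw [hQz.2.1]; rfl)
    have hyQy : y ∈ Qy := List.mem_of_mem_head? (by rw [hQy.2.1]; rfl)
    have hzQy : z ∉ Qy := fun hc => hQd z hzQz hc
    -- assembling the final two disjoint paths
    have assemble : ∀ s1 s2 Pz Px,
        (s1 = a ∨ s1 = b) → (s2 = a ∨ s2 = b) →
        PathF F₀ (fun u => u = z ∨ u = x) s1 Pz →
        PathF F₀ (fun u => u = z ∨ u = x) s2 Px →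
        (∀ u ∈ Pz, u ∉ Px) →
        Pz.getLast? = some z → Px.getLast? = some x →
        (∀ u ∈ Px.dropLast, ¬ (u = z ∨ u = x)) →
        ∃ l1 l2, PathF ((x, y) :: F₀) T s1 l1 ∧ PathF ((x, y) :: F₀) T s2 l2 ∧
          ∀ u ∈ l1, u ∉ l2 := by
      intro s1 s2 Pz Px hs1 hs2 hPz hPx hdisj hlz hlx hdx
      have hzPx : z ∉ Px := by
        intro hc
        obtain ⟨ys, hys⟩ := List.getLast?_eq_some_iff.mp hlx
        rw [hys] at hc
        rcases List.mem_append.mp hc with hc | hc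
        · exact hdx z (by rw [hys, List.dropLast_concat]; exact hc) (Or.inl rfl)
        · simp at hc; exact hxz hc.symm
      have hpwPz := pairwise_layerF layer hmono₀ hPz.2.2.1
      have hpwQz := pairwise_layerF layer hmono₀ hQz.2.2.1
      have noavoid : ∀ s l, (s = a ∨ s = b) → PathF F₀ T s l → z ∈ l := by
        intro s l hs hl; rcases hs with rfl | rfl; exacts [hza l hl, hzb l hl]
      have hPzQy : ∀ u ∈ Pz, u ∉ Qy := by
        intro u hu hu'
        have hune : u ≠ z := fun hq => hzQy (hq ▸ hu')
        obtain ⟨l, hl, hmem⟩ :=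
          splice layer hmono₀ hPz.2.2.1 hPz.2.1 hu hQy.2.2.1 hu' hQy.2.2.2
        rcases hmem z (noavoid s1 l hs1 hl) with h | h | h
        · exact hune h.symm
        · have h2 := pw_last (R := fun u w => layer w < layer u) hpwPz hlz hu hune
          omega
        · exact hzQy h.1
      have hQzPx : ∀ u ∈ Qz.tail, u ∉ Px := by
        intro u hu hu'
        have huQz : u ∈ Qz := List.mem_of_mem_tail hu
        have hune : u ≠ z := fun hq => hzPx (hq ▸ hu')
        obtain ⟨l, hl, hmem⟩ :=
          splice layer hmono₀ hPx.2.2.1 hPx.2.1 hu' hQz.2.2.1 huQz hQz.2.2.2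
        rcases hmem z (noavoid s2 l hs2 hl) with h | h | h
        · exact hune h.symm
        · exact hzPx h.1
        · have h2 := pw_head (R := fun u w => layer w < layer u) hpwQz hQz.2.1 huQz hune
          omega
      obtain ⟨c, cs, hceq⟩ := List.exists_cons_of_ne_nil hQz.1
      have hcz : c = z := by
        have h6 := hQz.2.1
        rw [hceq, List.head?_cons, Option.some_inj] at h6
        exact h6
      subst hcz
      have hQzchain : List.Chain' (fun u w => (u, w) ∈ F₀) (c :: cs) := by
        rw [← hceq]; exact hQz.2.2.1
      have hcsPx : ∀ u ∈ cs, u ∉ Px := fun u hu => hQzPx u (by rw [hceq]; exact hu)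
      have liftc : ∀ {l : List V}, List.Chain' (fun u w => (u, w) ∈ F₀) l →
          List.Chain' (fun u w => (u, w) ∈ (x, y) :: F₀) l :=
        fun hc => hc.imp fun u w hm => List.mem_cons_of_mem _ hm
      refine ⟨Pz ++ cs, Px ++ Qy, ⟨?_, ?_, ?_, ?_⟩, ⟨?_, ?_, ?_, ?_⟩, ?_⟩
      · exact fun hc => hPz.1 (List.append_eq_nil_iff.mp hc).1
      · rw [List.head?_append, hPz.2.1]; rfl
      · simp only [List.Chain', List.isChain_append]
        refine ⟨liftc hPz.2.2.1, liftc hQzchain.tail, ?_⟩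
        intro x' hx' y' hy'
        rw [hlz, Option.mem_def, Option.some_inj] at hx'
        subst hx'
        exact List.mem_cons_of_mem _ ((List.isChain_cons.mp hQzchain).1 y' hy')
      · rcases cs with - | ⟨c1, cs1⟩
        · obtain ⟨w, hw, hTw⟩ := hQz.2.2.2
          have h7 : Qz.getLast? = some c := by rw [hceq]; rfl
          rw [h7, Option.some_inj] at hw
          exact ⟨c, by rw [List.append_nil, hlz], by rw [hw]; exact hTw⟩
        · obtain ⟨w, hw, hTw⟩ := hQz.2.2.2
          refine ⟨w, ?_, hTw⟩
          rw [List.getLast?_append_of_ne_nil _ (by simp)]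
          rw [hceq] at hw
          rw [← List.getLast?_cons_cons (a := c) (b := c1) (l := cs1), hw]
      · exact fun hc => hPx.1 (List.append_eq_nil_iff.mp hc).1
      · rw [List.head?_append, hPx.2.1]; rfl
      · simp only [List.Chain', List.isChain_append]
        refine ⟨liftc hPx.2.2.1, liftc hQy.2.2.1, ?_⟩
        intro x' hx' y' hy'
        rw [hlx, Option.mem_def, Option.some_inj] at hx'
        subst hx'
        rw [hQy.2.1, Option.mem_def, Option.some_inj] at hy'
        subst hy'
        exact List.mem_cons_self
      · obtain ⟨w, hw, hTw⟩ := hQy.2.2.2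
        exact ⟨w, by rw [List.getLast?_append_of_ne_nil _ hQy.1, hw], hTw⟩
      · intro u hu hu'
        rcases List.mem_append.mp hu with hu | hu <;> rcases List.mem_append.mp hu' with hu' | hu'
        · exact hdisj u hu hu'
        · exact hPzQy u hu hu'
        · exact hcsPx u hu hu'
        · exact hQd u (by rw [hceq]; exact List.mem_cons_of_mem _ hu) hu'
    obtain ⟨wa, hwa, hTwa⟩ := hPa.2.2.2
    obtain ⟨wb, hwb, hTwb⟩ := hPb.2.2.2
    have hwab : wa ≠ wb :=
      fun hq => hPd wa (mem_of_getLast?' hwa) (hq ▸ mem_of_getLast?' hwb)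
    rcases hTwa with rfl | rfl
    · have hwbx : wb = x := by
        rcases hTwb with h | h
        · exact absurd h.symm hwab
        · exact h
      subst hwbx
      exact assemble a b Pa Pb (Or.inl rfl) (Or.inr rfl) hPa hPb hPd hwa hwb hPbd
    · have hwbz : wb = z := by
        rcases hTwb with h | h
        · exact h
        · exact absurd h.symm hwab
      subst hwbz
      obtain ⟨l1, l2, h1, h2, hdis⟩ := assemble b a Pb Pa (Or.inr rfl) (Or.inl rfl) hPb hPa
        (fun u hu hu' => hPd u hu' hu) hwb hwa hPad
      exact ⟨l2, l1, h2, h1, fun u hu hu' => hdis u hu' hu⟩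

end Helpers

/-- In a directed layered graph with two sources `r`, `g` in the top layer, where every
vertex reaches the bottom layer: if a bottleneck exists then there is a unique highest
bottleneck; otherwise there are vertex-disjoint paths from `r` and `g` ending at two
distinct vertices of layer `0`. -/

theorem stmt18 {V : Type*} (E : V → V → Prop) (layer : V → ℕ) (h : ℕ)
    (hbound : ∀ v, layer v ≤ h)
    (hmono : ∀ u v, E u v → layer v < layer u)
    (r g : V) (hr : layer r = h) (hg : layer g = h) (hrg : r ≠ g)
    (htop : ∀ v, layer v = h → v = r ∨ v = g)
    (hreach : ∀ x : V, ∃ l, PathTo0 E layer x l) :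
    ((∃ v, Bottleneck E layer r g v) →
      ∃! b, Bottleneck E layer r g b ∧
        ∀ b', Bottleneck E layer r g b' → layer b' ≤ layer b) ∧
    ((¬ ∃ v, Bottleneck E layer r g v) →
      ∃ lr lg : List V, PathTo0 E layer r lr ∧ PathTo0 E layer g lg ∧
        ∀ x ∈ lr, x ∉ lg) := by
  constructor
  · rintro ⟨v0, hv0⟩
    have hSne : Set.Nonempty {n | ∃ v, Bottleneck E layer r g v ∧ layer v = n} :=
      ⟨layer v0, v0, hv0, rfl⟩
    have hSbdd : BddAbove {n | ∃ v, Bottleneck E layer r g v ∧ layer v = n} :=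
      ⟨h, by rintro n ⟨v, -, rfl⟩; exact hbound v⟩
    obtain ⟨b0, hb0, hb0l⟩ := Nat.sSup_mem hSne hSbdd
    have hmax : ∀ b', Bottleneck E layer r g b' → layer b' ≤ layer b0 := by
      intro b' hb'
      rw [hb0l]
      exact le_csSup hSbdd ⟨b', hb', rfl⟩
    refine ⟨b0, ⟨hb0, hmax⟩, ?_⟩
    rintro b' ⟨hb', hmax'⟩
    have h1 : layer b' = layer b0 := le_antisymm (hmax b' hb') (hmax' b0 hb0)
    by_contra hne
    obtain ⟨l, hl⟩ := hreach r
    have hb0mem := hb0.1 l hl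
    have hb'mem := hb'.1 l hl
    have hpw := pairwise_layerR layer hmono hl.2.2.1
    rcases pw_two hpw hb'mem hb0mem hne with h2 | h2 <;> omega
  · intro hnb
    have hW' : ∀ c, ∃ l, (PathTo0 E layer r l ∨ PathTo0 E layer g l) ∧ c ∉ l := by
      intro c
      have hc : ¬ Bottleneck E layer r g c := fun hb => hnb ⟨c, hb⟩
      rw [Bottleneck] at hc
      rcases not_and_or.mp hc with h1 | h1 <;> push_neg at h1
      · obtain ⟨l, hl, hcl⟩ := h1
        exact ⟨l, Or.inl hl, hcl⟩
      · obtain ⟨l, hl, hcl⟩ := h1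
        exact ⟨l, Or.inr hl, hcl⟩
    choose W hW1 hW2 using hW'
    obtain ⟨P0, hP0⟩ := hreach r
    set T₀ : V → Prop := fun v => layer v = 0 with hT₀
    set F : List (V × V) := edgesOf P0 ++ (P0.map fun c => edgesOf (W c)).flatten with hF
    have hFE : ∀ p ∈ F, E p.1 p.2 := by
      intro p hp
      rcases List.mem_append.mp hp with hp | hp
      · exact edges_of_chain' P0 hP0.2.2.1 p hp
      · rw [List.mem_flatten] at hp
        obtain ⟨L, hL, hpL⟩ := hp
        rw [List.mem_map] at hL
        obtain ⟨c, hc, rfl⟩ := hL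
        rcases hW1 c with h1 | h1
        · exact edges_of_chain' (W c) h1.2.2.1 p hpL
        · exact edges_of_chain' (W c) h1.2.2.1 p hpL
    have hmonoF : ∀ p ∈ F, layer p.2 < layer p.1 := fun p hp => hmono _ _ (hFE p hp)
    have toF : ∀ s l, PathTo0 E layer s l → (∀ p ∈ edgesOf l, p ∈ F) → PathF F T₀ s l := by
      intro s l hl hsub
      exact ⟨hl.1, hl.2.1, chain'_of_edges l hsub, hl.2.2.2⟩
    have fromF : ∀ s l, PathF F T₀ s l → PathTo0 E layer s l := by
      intro s l hl
      exact ⟨hl.1, hl.2.1, hl.2.2.1.imp (fun u w hm => hFE (u, w) hm), hl.2.2.2⟩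
    have hnbF : ¬ ∃ v, (∀ l, PathF F T₀ r l → v ∈ l) ∧ (∀ l, PathF F T₀ g l → v ∈ l) := by
      rintro ⟨v, hvr, hvg⟩
      have hP0F : PathF F T₀ r P0 := toF r P0 hP0 (fun p hp => List.mem_append_left _ hp)
      have hvP0 : v ∈ P0 := hvr P0 hP0F
      have hWsub : ∀ p ∈ edgesOf (W v), p ∈ F := by
        intro p hp
        refine List.mem_append_right _ (List.mem_flatten.mpr ⟨edgesOf (W v), ?_, hp⟩)
        exact List.mem_map.mpr ⟨v, hvP0, rfl⟩
      rcases hW1 v with h1 | h1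
      · exact hW2 v (hvr (W v) (toF r (W v) h1 hWsub))
      · exact hW2 v (hvg (W v) (toF g (W v) h1 hWsub))
    obtain ⟨lr, lg, hlr, hlg, hd⟩ := menger2 layer F T₀ r g hmonoF hrg hnbF
    exact ⟨lr, lg, fromF r lr hlr, fromF g lg hlg, hd⟩

end MV
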